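/- Let A ∈ ℝ^{m×d} and b ∈ ℝ^m define the polytope P = {x ∈ ℝ^d : Ax ≤ b}, and assume that every set of d−1 rows of A is linearly independent (with m ≥ d−1 ≥ 1). Let x, y, z ∈ P be three distinct collinear points such that each of x, y, z satisfies at least d−1 of the constraints A_j·x ≤ b_j with equality. Then there exists a set J of d−1 indices in {1,…,m} such that the rows {A_j : j ∈ J} are linearly independent and A_j·x = A_j·y = A_j·z = b_j for all j ∈ J; moreover, the affine line containing x, y, z equals the edge-space e_J = {w ∈ ℝ^d : A_j·w = b_j for all j ∈ J}. In particular, x, y, z all lie on the same edge of P. -/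

import Mathlib

open Matrix

private lemma beta_zero {t₁ t₂ β : ℝ} (ht₁ : t₁ < 0) (ht₂ : 0 < t₂)
    (h1 : t₁ * β ≤ 0) (h2 : t₂ * β ≤ 0) : β = 0 := by
  have hle : β ≤ 0 := by nlinarith
  have hge : 0 ≤ β := by nlinarith
  linarith

set_option maxHeartbeats 1000000 in
/-- Lemma 3.4: three distinct collinear points, each lying on an edge of the
polytope `P = {x | Ax ≤ b}` (i.e. each binding at least `d - 1` constraints),
all lie on the same edge of `P`, and the affine line through them is the
corresponding edge-space. -/
theorem stmt_3 {d m : ℕ} (hd : 2 ≤ d) (hm : d - 1 ≤ m)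
    (A : Matrix (Fin m) (Fin d) ℝ) (b : Fin m → ℝ)
    (hBdd : Bornology.IsBounded {w : Fin d → ℝ | ∀ j, A j ⬝ᵥ w ≤ b j})
    (hrows : ∀ J : Finset (Fin m), J.card = d - 1 →
      LinearIndependent ℝ (fun j : J => A (j : Fin m)))
    (x y z : Fin d → ℝ)
    (hxP : ∀ j, A j ⬝ᵥ x ≤ b j) (hyP : ∀ j, A j ⬝ᵥ y ≤ b j)
    (hzP : ∀ j, A j ⬝ᵥ z ≤ b j)
    (hxy : x ≠ y) (hyz : y ≠ z) (hxz : x ≠ z)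
    (hcol : Collinear ℝ ({x, y, z} : Set (Fin d → ℝ)))
    (hxbind : d - 1 ≤ {j : Fin m | A j ⬝ᵥ x = b j}.ncard)
    (hybind : d - 1 ≤ {j : Fin m | A j ⬝ᵥ y = b j}.ncard)
    (hzbind : d - 1 ≤ {j : Fin m | A j ⬝ᵥ z = b j}.ncard) :
    ∃ J : Finset (Fin m), J.card = d - 1 ∧
      LinearIndependent ℝ (fun j : J => A (j : Fin m)) ∧
      (∀ j ∈ J, A j ⬝ᵥ x = b j ∧ A j ⬝ᵥ y = b j ∧ A j ⬝ᵥ z = b j) ∧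
      {w : Fin d → ℝ | ∀ j ∈ J, A j ⬝ᵥ w = b j} =
        (affineSpan ℝ ({x, y, z} : Set (Fin d → ℝ)) : Set (Fin d → ℝ)) := by
  classical
  obtain ⟨v, hv⟩ := (collinear_iff_of_mem
    (show x ∈ ({x, y, z} : Set (Fin d → ℝ)) by simp)).mp hcol
  obtain ⟨r, hr⟩ := hv y (by simp)
  obtain ⟨s, hs⟩ := hv z (by simp)
  simp only [vadd_eq_add] at hr hs
  have hr0 : r ≠ 0 := by rintro rfl; apply hxy; rw [hr]; simp
  have hs0 : s ≠ 0 := by rintro rfl; apply hxz; rw [hs]; simp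
  have hrs : r ≠ s := by rintro rfl; apply hyz; rw [hr, hs]
  have hdy : ∀ j, A j ⬝ᵥ y = A j ⬝ᵥ x + r * (A j ⬝ᵥ v) := by
    intro j; rw [hr]
    simp only [dotProduct_add, dotProduct_smul, smul_eq_mul]; ring
  have hdz : ∀ j, A j ⬝ᵥ z = A j ⬝ᵥ x + s * (A j ⬝ᵥ v) := by
    intro j; rw [hs]
    simp only [dotProduct_add, dotProduct_smul, smul_eq_mul]; ring
  -- key step: the binding set of the middle point binds all three points
  have key : ∃ S : Set (Fin m), d - 1 ≤ S.ncard ∧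
      ∀ j ∈ S, A j ⬝ᵥ x = b j ∧ A j ⬝ᵥ y = b j ∧ A j ⬝ᵥ z = b j := by
    have finish : ∀ j : Fin m, A j ⬝ᵥ v = 0 → (A j ⬝ᵥ x = b j ∨ A j ⬝ᵥ y = b j ∨ A j ⬝ᵥ z = b j) →
        A j ⬝ᵥ x = b j ∧ A j ⬝ᵥ y = b j ∧ A j ⬝ᵥ z = b j := by
      intro j hβ hone
      have h1 := hdy j; have h2 := hdz j
      rw [hβ, mul_zero, add_zero] at h1 h2
      rcases hone with h | h | h <;> exact ⟨by linarith, by linarith, by linarith⟩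
    rcases hr0.lt_or_gt with hrneg | hrpos
    · rcases hs0.lt_or_gt with hsneg | hspos
      · rcases hrs.lt_or_gt with h | h
        · -- r < s < 0 : middle is z
          refine ⟨_, hzbind, fun j hj => ?_⟩
          have hj : A j ⬝ᵥ z = b j := hj
          refine finish j (beta_zero (t₁ := r - s) (t₂ := -s) (by linarith) (by linarith)
            (by have := hyP j; have h1 := hdy j; have h2 := hdz j; nlinarith)
            (by have := hxP j; have h2 := hdz j; nlinarith)) (Or.inr (Or.inr hj))
        · -- s < r < 0 : middle is y
          refine ⟨_, hybind, fun j hj => ?_⟩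
          have hj : A j ⬝ᵥ y = b j := hj
          refine finish j (beta_zero (t₁ := s - r) (t₂ := -r) (by linarith) (by linarith)
            (by have := hzP j; have h1 := hdy j; have h2 := hdz j; nlinarith)
            (by have := hxP j; have h1 := hdy j; nlinarith)) (Or.inr (Or.inl hj))
      · -- r < 0 < s : middle is x
        refine ⟨_, hxbind, fun j hj => ?_⟩
        have hj : A j ⬝ᵥ x = b j := hj
        refine finish j (beta_zero (t₁ := r) (t₂ := s) hrneg hspos
          (by have := hyP j; have h1 := hdy j; nlinarith)
          (by have := hzP j; have h2 := hdz j; nlinarith)) (Or.inl hj)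
    · rcases hs0.lt_or_gt with hsneg | hspos
      · -- s < 0 < r : middle is x
        refine ⟨_, hxbind, fun j hj => ?_⟩
        have hj : A j ⬝ᵥ x = b j := hj
        refine finish j (beta_zero (t₁ := s) (t₂ := r) hsneg hrpos
          (by have := hzP j; have h2 := hdz j; nlinarith)
          (by have := hyP j; have h1 := hdy j; nlinarith)) (Or.inl hj)
      · rcases hrs.lt_or_gt with h | h
        · -- 0 < r < s : middle is y
          refine ⟨_, hybind, fun j hj => ?_⟩
          have hj : A j ⬝ᵥ y = b j := hj
          refine finish j (beta_zero (t₁ := -r) (t₂ := s - r) (by linarith) (by linarith)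
            (by have := hxP j; have h1 := hdy j; nlinarith)
            (by have := hzP j; have h1 := hdy j; have h2 := hdz j; nlinarith)) (Or.inr (Or.inl hj))
        · -- 0 < s < r : middle is z
          refine ⟨_, hzbind, fun j hj => ?_⟩
          have hj : A j ⬝ᵥ z = b j := hj
          refine finish j (beta_zero (t₁ := -s) (t₂ := r - s) (by linarith) (by linarith)
            (by have := hxP j; have h2 := hdz j; nlinarith)
            (by have := hyP j; have h1 := hdy j; have h2 := hdz j; nlinarith)) (Or.inr (Or.inr hj))
  obtain ⟨S, hScard, hSall⟩ := key
  have hSfin : S.Finite := Set.toFinite S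
  obtain ⟨J, hJsub, hJcard⟩ := Finset.exists_subset_card_eq (s := hSfin.toFinset) (n := d - 1)
    (by rwa [Set.ncard_eq_toFinset_card S hSfin] at hScard)
  have hJbind : ∀ j ∈ J, A j ⬝ᵥ x = b j ∧ A j ⬝ᵥ y = b j ∧ A j ⬝ᵥ z = b j := by
    intro j hj
    exact hSall j (hSfin.mem_toFinset.mp (hJsub hj))
  have hJli := hrows J hJcard
  refine ⟨J, hJcard, hJli, hJbind, ?_⟩
  -- span of {x, y, z} equals the line through x and y
  have hyx : y - x = r • v := by rw [hr]; abel
  have hz_mem : z ∈ line[ℝ, x, y] := by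
    have hz' : z = (s / r) • (y -ᵥ x) +ᵥ x := by
      rw [vsub_eq_sub, hyx, vadd_eq_add, smul_smul, div_mul_cancel₀ s hr0, hs]
    rw [hz']
    exact smul_vsub_vadd_mem_affineSpan_pair _ _ _
  have hspan_eq : (affineSpan ℝ ({x, y, z} : Set (Fin d → ℝ))) = line[ℝ, x, y] := by
    apply le_antisymm
    · rw [affineSpan_le]
      intro p hp
      simp only [Set.mem_insert_iff, Set.mem_singleton_iff] at hp
      rcases hp with h | h | h <;> rw [h]
      · exact left_mem_affineSpan_pair ℝ x y
      · exact right_mem_affineSpan_pair ℝ x y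
      · exact hz_mem
    · exact affineSpan_mono ℝ (by intro p hp; simp only [Set.mem_insert_iff,
        Set.mem_singleton_iff] at hp ⊢; tauto)
  -- the kernel of the submatrix has dimension 1
  set M : Matrix J (Fin d) ℝ := fun j : J => A (j : Fin m) with hM
  have hMrank : M.rank = d - 1 := by
    rw [hJli.rank_matrix, Fintype.card_coe, hJcard]
  have hker : Module.finrank ℝ (LinearMap.ker M.mulVecLin) = 1 := by
    have h1 := LinearMap.finrank_range_add_finrank_ker M.mulVecLin
    have h2 : Module.finrank ℝ (Fin d → ℝ) = d := by simp
    rw [h2] at h1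
    have h3 : Module.finrank ℝ (LinearMap.range M.mulVecLin) = d - 1 := hMrank
    omega
  have hyx0 : y - x ≠ 0 := sub_ne_zero.mpr (Ne.symm hxy)
  have hyxK : y - x ∈ LinearMap.ker M.mulVecLin := by
    rw [LinearMap.mem_ker, mulVecLin_apply]
    funext j
    obtain ⟨h1, h2, _⟩ := hJbind j j.2
    show A (j : Fin m) ⬝ᵥ (y - x) = 0
    rw [dotProduct_sub, h1, h2, sub_self]
  have hKeq : LinearMap.ker M.mulVecLin = Submodule.span ℝ {y - x} := by
    symm
    apply Submodule.eq_of_le_of_finrank_le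
    · rwa [Submodule.span_le, Set.singleton_subset_iff]
    · rw [finrank_span_singleton hyx0, hker]
  ext w
  simp only [Set.mem_setOf_eq, SetLike.mem_coe]
  constructor
  · intro hw
    have hwK : w - x ∈ LinearMap.ker M.mulVecLin := by
      rw [LinearMap.mem_ker, mulVecLin_apply]
      funext j
      obtain ⟨h1, _, _⟩ := hJbind j j.2
      show A (j : Fin m) ⬝ᵥ (w - x) = 0
      rw [dotProduct_sub, hw j j.2, h1, sub_self]
    rw [hKeq, Submodule.mem_span_singleton] at hwK
    obtain ⟨c, hc⟩ := hwK
    rw [hspan_eq]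
    have hw' : w = c • (y -ᵥ x) +ᵥ x := by
      rw [vsub_eq_sub, vadd_eq_add, hc]; abel
    rw [hw']
    exact smul_vsub_vadd_mem_affineSpan_pair _ _ _
  · intro hw j hj
    rw [hspan_eq] at hw
    have hw' : (w - x) +ᵥ x ∈ line[ℝ, x, y] := by
      rwa [vadd_eq_add, sub_add_cancel]
    obtain ⟨c, hc⟩ := vadd_left_mem_affineSpan_pair.mp hw'
    rw [vsub_eq_sub] at hc
    have hw'' : w = x + c • (y - x) := by rw [hc]; abel
    obtain ⟨h1, h2, _⟩ := hJbind j hj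
    rw [hw'', dotProduct_add, dotProduct_smul, smul_eq_mul, dotProduct_sub, h1, h2]
    ring
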